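/- arXiv:2308.09989 — 2 statements merged into one kernel-verified Lean document; each statement's English description precedes it below -/
import Mathlib

section
/- Let G be a ℤ-invariant valued abelian group such that for all g ∈ G and all m ∈ ℕ the set Δ_m(g) = {v(g − m·g') : g' ∈ G} admits a maximum, and let H/G be an extension of valued abelian groups (where H is not required to be ℤ-invariant). Then H/G is maximal if and only if H/G is pseudo-complete. -/
universe u

/-- `v : G → Γ` is a valuation making the abelian group `G` a valued abelian group:
`Γ` is a linear order with greatest element `⊤` (denoted `∞` in the paper), `v` is
surjective, `v g = ⊤` iff `g = 0`, and `v (g - h) ≥ min (v g) (v h)`. -/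
structure IsValuedGroup {G Γ : Type*} [AddCommGroup G] [LinearOrder Γ] [OrderTop Γ]
    (v : G → Γ) : Prop where
  surjective : Function.Surjective v
  eq_top_iff : ∀ g : G, v g = ⊤ ↔ g = 0
  min_le_sub : ∀ g h : G, min (v g) (v h) ≤ v (g - h)

/-- A sequence `a` indexed by a linearly ordered set `I` is pseudo-Cauchy if eventually
`v (a i - a j) < v (a j - a k)` for `i < j < k`. -/
def IsPseudoCauchy {G Γ I : Type*} [AddCommGroup G] [LinearOrder Γ] [LinearOrder I]
    (v : G → Γ) (a : I → G) : Prop :=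
  ∃ i₀ : I, ∀ i j k : I, i₀ ≤ i → i < j → j < k → v (a i - a j) < v (a j - a k)

/-- `x` is a pseudo-limit of the sequence `a` if eventually
`v (a i - x) = v (a i - a j)` for `i < j`. -/
def IsPseudoLimit {G Γ I : Type*} [AddCommGroup G] [LinearOrder Γ] [LinearOrder I]
    (v : G → Γ) (a : I → G) (x : G) : Prop :=
  ∃ i₀ : I, ∀ i j : I, i₀ ≤ i → i < j → v (a i - x) = v (a i - a j)

/-- For subsets `G ⊆ K` of an ambient valued abelian group `(H, v)`, `K` is an immediate
extension of `G` (both regarded as valued groups via restriction of `v`): the nonzero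
values of `K` and of `G` coincide, and for every value `γ` of `G` and every `k ∈ K` with
`v k ≥ γ` there is `g ∈ G` with `v g ≥ γ` and `v (k - g) > γ` (i.e. the inclusion induces
isomorphisms of ribs). -/
def IsImmediateIn {H Γ : Type*} [AddCommGroup H] [LinearOrder Γ] [OrderTop Γ]
    (v : H → Γ) (G K : Set H) : Prop :=
  (∀ k ∈ K, k ≠ 0 → ∃ g ∈ G, g ≠ 0 ∧ v g = v k) ∧
  (∀ γ : Γ, (∃ g ∈ G, g ≠ 0 ∧ v g = γ) →
    ∀ k ∈ K, γ ≤ v k → ∃ g ∈ G, γ ≤ v g ∧ γ < v (k - g))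

/-- Relative pseudo-completeness: every pseudo-Cauchy sequence with entries in `G` which
has a pseudo-limit in `K` already has a pseudo-limit in `G` (all inside the ambient valued
abelian group `(H, v)`). -/
def IsPseudoCompleteIn {H Γ : Type u} [AddCommGroup H] [LinearOrder Γ]
    (v : H → Γ) (G K : Set H) : Prop :=
  ∀ (I : Type u) [LinearOrder I] [WellFoundedLT I] [NoMaxOrder I] [Nonempty I]
    (a : I → H), (∀ i, a i ∈ G) → IsPseudoCauchy v a →
    (∃ x ∈ K, IsPseudoLimit v a x) → ∃ x ∈ G, IsPseudoLimit v a x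

/-- A valued abelian group is pseudo-complete if every pseudo-Cauchy sequence in it
admits a pseudo-limit in it. -/
def IsPseudoComplete {G Γ : Type u} [AddCommGroup G] [LinearOrder Γ] (v : G → Γ) : Prop :=
  ∀ (I : Type u) [LinearOrder I] [WellFoundedLT I] [NoMaxOrder I] [Nonempty I]
    (a : I → G), IsPseudoCauchy v a → ∃ x : G, IsPseudoLimit v a x

/-- The extension `H/G` is maximal: there is no subgroup `K` with `G ⊊ K ⊆ H` such that
`K/G` is immediate. -/
def IsMaximalIn {H Γ : Type u} [AddCommGroup H] [LinearOrder Γ] [OrderTop Γ]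
    (v : H → Γ) (G : AddSubgroup H) : Prop :=
  ∀ K : AddSubgroup H, G < K → ¬ IsImmediateIn v (G : Set H) (K : Set H)

/-- A valued abelian group `(G, v)` is maximal if it admits no proper immediate extension:
whenever `(H, w)` is a valued abelian group (with the same value set, as immediate extensions
preserve the skeleton) and `f : G →+ H` is an injective valuation-preserving homomorphism
making `H` an immediate extension of the image of `G`, then `f` is surjective. -/
def IsMaximal {G Γ : Type u} [AddCommGroup G] [LinearOrder Γ] [OrderTop Γ]
    (v : G → Γ) : Prop :=
  ∀ (H : Type u) (_ : AddCommGroup H) (w : H → Γ), IsValuedGroup w →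
    ∀ f : G →+ H, Function.Injective f → (∀ g : G, w (f g) = v g) →
      IsImmediateIn w (Set.range f) Set.univ → Function.Surjective f

section Aux
variable {H Γ : Type*} [AddCommGroup H] [LinearOrder Γ] [OrderTop Γ] {v : H → Γ}

theorem IsValuedGroup.v_zero (hv : IsValuedGroup v) : v (0 : H) = ⊤ := (hv.eq_top_iff 0).2 rfl

theorem IsValuedGroup.v_neg (hv : IsValuedGroup v) (g : H) : v (-g) = v g := by
  have key : ∀ x : H, v x ≤ v (-x) := by
    intro x
    have h := hv.min_le_sub 0 x
    rw [zero_sub] at h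
    simpa [hv.v_zero] using h
  exact le_antisymm (by simpa using key (-g)) (key g)

theorem IsValuedGroup.min_le_add (hv : IsValuedGroup v) (g h : H) :
    min (v g) (v h) ≤ v (g + h) := by
  have h1 := hv.min_le_sub g (-h)
  rw [sub_neg_eq_add, hv.v_neg] at h1
  exact h1

theorem IsValuedGroup.v_add_eq_left (hv : IsValuedGroup v) {g h : H} (hlt : v g < v h) :
    v (g + h) = v g := by
  refine le_antisymm ?_ (le_trans (le_min le_rfl hlt.le) (hv.min_le_add g h))
  by_contra hc
  push_neg at hc
  have h1 := hv.min_le_sub (g + h) h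
  rw [add_sub_cancel_right] at h1
  exact absurd h1 (not_le.2 (lt_min hc hlt))

theorem IsValuedGroup.le_v_nsmul (hv : IsValuedGroup v) (g : H) (n : ℕ) :
    v g ≤ v (n • g) := by
  induction n with
  | zero => simp [hv.v_zero]
  | succ n ih =>
    rw [succ_nsmul]
    exact le_trans (le_min ih le_rfl) (hv.min_le_add (n • g) g)

end Aux

theorem dirA {H Γ : Type u} [AddCommGroup H] [LinearOrder Γ]
    [OrderTop Γ] (v : H → Γ) (hv : IsValuedGroup v) (G : AddSubgroup H)
    (hinv : ∀ g ∈ G, ∀ n : ℕ, 0 < n → v (n • g) = v g)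
    (hdelta : ∀ g ∈ G, ∀ m : ℕ,
      ∃ δ : Γ, IsGreatest {δ' : Γ | ∃ g' ∈ G, v (g - m • g') = δ'} δ)
    (hmax : IsMaximalIn v G) : IsPseudoCompleteIn v (G : Set H) Set.univ := by
  intro I _ _ _ _ a haG hpcseq hex
  by_contra hno
  push_neg at hno
  obtain ⟨x, -, hx⟩ := hex
  have hxG : x ∉ (G : Set H) := fun hmem => hno x hmem hx
  obtain ⟨i₀, hpc0⟩ := hpcseq
  obtain ⟨i₁, hlim⟩ := hx
  set i₂ := max i₀ i₁ with hi₂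
  have F1 : ∀ i j : I, i₂ ≤ i → i < j → v (a i - a j) = v (a i - x) :=
    fun i j hi hij => (hlim i j (le_trans (le_max_right _ _) hi) hij).symm
  have F2 : ∀ i j : I, i₂ ≤ i → i < j → v (a i - x) < v (a j - x) := by
    intro i j hi hij
    obtain ⟨l, hl⟩ := exists_gt j
    have h1 := hpc0 i j l (le_trans (le_max_left _ _) hi) hij hl
    rwa [F1 i j hi hij, F1 j l (le_trans hi hij.le) hl] at h1
  have Ftop : ∀ i : I, i₂ ≤ i → v (a i - x) < ⊤ := by
    intro i hi
    obtain ⟨j, hj⟩ := exists_gt i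
    exact lt_of_lt_of_le (F2 i j hi hj) le_top
  have F3 : ∀ h ∈ G, ∃ i : I, i₂ ≤ i ∧ v (x - h) < v (a i - x) := by
    intro h hh
    by_contra hc
    push_neg at hc
    refine hno h hh ⟨i₂, fun i j hi hij => ?_⟩
    have h1 : v (a i - x) < v (x - h) :=
      lt_of_lt_of_le (F2 i j hi hij) (hc j (le_trans hi hij.le))
    have h2 := hv.v_add_eq_left h1
    rw [sub_add_sub_cancel] at h2
    rw [h2, F1 i j hi hij]
  -- main lemma, positive n
  have Lpos : ∀ g ∈ G, ∀ n : ℕ, 0 < n → ∃ g' ∈ G, g' ≠ 0 ∧ v g' = v (g + n • x) ∧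
      v (g + n • x) < v (g + n • x - g') := by
    intro g hg n hn
    obtain ⟨δ, ⟨g₀, hg₀G, hg₀v⟩, hub⟩ := hdelta (-g) (G.neg_mem hg) n
    have hval : ∀ y : H, v (-g - n • y) = v (g + n • y) := by
      intro y
      rw [show -g - n • y = -(g + n • y) by abel, hv.v_neg]
    rw [hval] at hg₀v
    have hubv : ∀ y ∈ G, v (g + n • y) ≤ δ := by
      intro y hy
      exact hub ⟨y, hy, hval y⟩
    by_cases hcase : ∃ j : I, i₂ ≤ j ∧ δ < v (a j - x)
    · obtain ⟨j, hj2, hjδ⟩ := hcase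
      have hjtop : v (a j - x) < ⊤ := Ftop j hj2
      have hle : v (g + n • a j) ≤ δ := hubv (a j) (haG j)
      have hkey : g + n • x - (g + n • a j) = n • (x - a j) := by
        rw [smul_sub]; abel
      have hbig : v (a j - x) ≤ v (n • (x - a j)) := by
        have := hv.le_v_nsmul (x - a j) n
        rwa [← hv.v_neg (x - a j), neg_sub] at this
      have hlt : v (g + n • a j) < v (n • (x - a j)) :=
        lt_of_le_of_lt hle (lt_of_lt_of_le hjδ hbig)
      have hvk : v (g + n • x) = v (g + n • a j) := by
        have h5 := hv.v_add_eq_left hlt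
        rw [show g + n • a j + n • (x - a j) = g + n • x by rw [smul_sub]; abel] at h5
        exact h5
      refine ⟨g + n • a j, G.add_mem hg (G.nsmul_mem (haG j) n), ?_, hvk.symm, ?_⟩
      · intro h0
        rw [h0, hv.v_zero] at hle
        exact absurd (lt_of_lt_of_le hjδ (le_trans le_top hle)) (lt_irrefl δ)
      · rw [hvk, hkey]
        exact lt_of_le_of_lt hle (lt_of_lt_of_le hjδ hbig)
    · push_neg at hcase
      obtain ⟨i, hi2, hβ⟩ := F3 g₀ hg₀G
      have hitop : v (a i - x) < ⊤ := Ftop i hi2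
      have hγδ : v (a i - x) ≤ δ := hcase i hi2
      have h4 : v (a i - g₀) = v (x - g₀) := by
        have h5 := hv.v_add_eq_left hβ
        rw [show x - g₀ + (a i - x) = a i - g₀ by abel] at h5
        exact h5
      have hg''G : a i - g₀ ∈ G := G.sub_mem (haG i) hg₀G
      have hsm : v (n • (a i - g₀)) = v (x - g₀) := by
        rw [hinv (a i - g₀) hg''G n hn, h4]
      have hsm0 : n • (a i - g₀) ≠ 0 := by
        intro h0
        rw [h0, hv.v_zero] at hsm
        exact absurd (lt_of_lt_of_le hβ le_top) (by rw [hsm]; exact not_lt.2 le_rfl)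
      have hkey2 : g + n • x - n • (a i - g₀) = (g + n • g₀) + n • (x - a i) := by
        rw [smul_sub, smul_sub]; abel
      have hbig2 : v (a i - x) ≤ v (n • (x - a i)) := by
        have := hv.le_v_nsmul (x - a i) n
        rwa [← hv.v_neg (x - a i), neg_sub] at this
      have hrest : v (a i - x) ≤ v (g + n • x - n • (a i - g₀)) := by
        rw [hkey2]
        refine le_trans (le_min (le_trans hγδ ?_) hbig2) (hv.min_le_add _ _)
        rw [hg₀v]
      have hvk2 : v (g + n • x) = v (x - g₀) := by
        have hlt2 : v (n • (a i - g₀)) < v (g + n • x - n • (a i - g₀)) := by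
          rw [hsm]; exact lt_of_lt_of_le hβ hrest
        have h6 := hv.v_add_eq_left hlt2
        rw [show n • (a i - g₀) + (g + n • x - n • (a i - g₀)) = g + n • x by abel] at h6
        rw [h6, hsm]
      refine ⟨n • (a i - g₀), G.nsmul_mem hg''G n, hsm0, by rw [hsm, hvk2], ?_⟩
      rw [hvk2]
      exact lt_of_lt_of_le hβ hrest
  -- integer version
  have L' : ∀ g ∈ G, ∀ z : ℤ, z ≠ 0 → ∃ g' ∈ G, g' ≠ 0 ∧ v g' = v (g + z • x) ∧
      v (g + z • x) < v (g + z • x - g') := by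
    intro g hg z hz
    rcases lt_trichotomy z 0 with hneg | rfl | hpos
    · have hzn : ((-z).toNat : ℤ) = -z := Int.toNat_of_nonneg (by omega)
      obtain ⟨g', hg'G, hg'0, hg'v, hg'lt⟩ :=
        Lpos (-g) (G.neg_mem hg) (-z).toNat (by omega)
      have key : -g + (-z).toNat • x = -(g + z • x) := by
        rw [← natCast_zsmul, hzn, neg_zsmul]; abel
      have e1 : v (g + z • x) = v (-g + (-z).toNat • x) := by
        rw [key, hv.v_neg]
      have e2 : v (-g + (-z).toNat • x - g') = v (g + z • x - -g') := by
        rw [show -g + (-z).toNat • x - g' = -(g + z • x - -g') from by rw [key]; abel]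
        exact hv.v_neg _
      refine ⟨-g', G.neg_mem hg'G, neg_ne_zero.2 hg'0, ?_, ?_⟩
      · rw [hv.v_neg, hg'v, ← e1]
      · rw [e1, ← e2]; exact hg'lt
    · exact absurd rfl hz
    · have hzn : (z.toNat : ℤ) = z := Int.toNat_of_nonneg hpos.le
      have key : z • x = z.toNat • x := by rw [← natCast_zsmul, hzn]
      rw [key]
      exact Lpos g hg z.toNat (by omega)
  -- the subgroup K
  set K : AddSubgroup H := G ⊔ AddSubgroup.zmultiples x with hK
  have hxK : x ∈ K := AddSubgroup.mem_sup_right (AddSubgroup.mem_zmultiples x)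
  have hGK : G < K := lt_of_le_of_ne le_sup_left (fun hEq => hxG (hEq ▸ hxK))
  have hmemK : ∀ w ∈ K, ∃ g ∈ G, ∃ z : ℤ, w = g + z • x := by
    intro w hw
    rw [hK, AddSubgroup.mem_sup] at hw
    obtain ⟨g, hgG, y, hy, rfl⟩ := hw
    obtain ⟨z, rfl⟩ := AddSubgroup.mem_zmultiples_iff.1 hy
    exact ⟨g, hgG, z, rfl⟩
  refine hmax K hGK ⟨?_, ?_⟩
  · intro k hk hk0
    obtain ⟨g, hgG, z, rfl⟩ := hmemK k hk
    by_cases hz : z = 0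
    · subst hz
      refine ⟨g + (0:ℤ) • x, by simpa using hgG, hk0, rfl⟩
    · obtain ⟨g', hg'G, hg'0, hg'v, -⟩ := L' g hgG z hz
      exact ⟨g', hg'G, hg'0, hg'v⟩
  · intro γ hγ k hk hγk
    obtain ⟨gγ, hgγG, hgγ0, hgγv⟩ := hγ
    have hγtop : γ < ⊤ := by
      rcases lt_or_eq_of_le (le_top : γ ≤ ⊤) with h | h
      · exact h
      · exact absurd ((hv.eq_top_iff gγ).1 (by rw [hgγv, h])) hgγ0
    rcases lt_or_eq_of_le hγk with hlt | heq
    · exact ⟨0, G.zero_mem, le_top.trans (by rw [hv.v_zero]), by rwa [sub_zero]⟩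
    · obtain ⟨g, hgG, z, rfl⟩ := hmemK k hk
      by_cases hz : z = 0
      · subst hz
        refine ⟨g + (0:ℤ) • x, by simpa using hgG, heq.le.trans le_rfl, ?_⟩
        rw [sub_self, hv.v_zero]; exact hγtop
      · obtain ⟨g', hg'G, hg'0, hg'v, hg'lt⟩ := L' g hgG z hz
        exact ⟨g', hg'G, by rw [hg'v, ← heq], heq ▸ hg'lt⟩

theorem dirB {H Γ : Type u} [AddCommGroup H] [LinearOrder Γ]
    [OrderTop Γ] (v : H → Γ) (hv : IsValuedGroup v) (G : AddSubgroup H)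
    (hpc : IsPseudoCompleteIn v (G : Set H) Set.univ) : IsMaximalIn v G := by
  intro K hGK himm
  obtain ⟨k, hkK, hkG⟩ := (SetLike.lt_iff_le_and_exists.mp hGK).2
  set S : Set Γ := {γ | ∃ g ∈ (G : Set H), v (k - g) = γ} with hS
  have hSne : v k ∈ S := ⟨0, G.zero_mem, by rw [sub_zero]⟩
  have hSnomax : ∀ s ∈ S, ∃ s' ∈ S, s < s' := by
    rintro s ⟨g, hgG, rfl⟩
    have hkg0 : k - g ≠ 0 := sub_ne_zero.2 (fun h => hkG (h ▸ hgG))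
    have hkgK : (k - g) ∈ (K : Set H) := K.sub_mem hkK (hGK.le hgG)
    obtain ⟨g₁, hg₁G, hg₁0, hg₁v⟩ := himm.1 (k - g) hkgK hkg0
    obtain ⟨g₂, hg₂G, -, hg₂lt⟩ :=
      himm.2 (v (k - g)) ⟨g₁, hg₁G, hg₁0, hg₁v⟩ (k - g) hkgK le_rfl
    refine ⟨v (k - (g + g₂)), ⟨g + g₂, G.add_mem hgG hg₂G, rfl⟩, ?_⟩
    rw [show k - (g + g₂) = k - g - g₂ by abel]
    exact hg₂lt
  -- well-ordered cofinal subset of S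
  have hr : WellFounded (WellOrderingRel : Γ → Γ → Prop) := IsWellFounded.wf
  set T : Set Γ := {s | s ∈ S ∧ ∀ s' ∈ S, WellOrderingRel s' s → s' < s} with hT
  have hTS : T ⊆ S := fun s hs => hs.1
  have hcof : ∀ s ∈ S, ∃ t ∈ T, s ≤ t := by
    intro s hs
    have hUne : {u | u ∈ S ∧ s ≤ u}.Nonempty := ⟨s, hs, le_rfl⟩
    have huU := hr.min_mem _ hUne
    refine ⟨hr.min _ hUne, ⟨huU.1, ?_⟩, huU.2⟩
    intro s' hs' hrs'
    by_contra hc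
    push_neg at hc
    exact hr.not_lt_min {u | u ∈ S ∧ s ≤ u} ⟨hs', le_trans huU.2 hc⟩ hrs'
  have hTne : T.Nonempty := by
    obtain ⟨t, ht, -⟩ := hcof (v k) hSne; exact ⟨t, ht⟩
  have hTnomax : ∀ t ∈ T, ∃ t' ∈ T, t < t' := by
    intro t ht
    obtain ⟨s, hs, hts⟩ := hSnomax t (hTS ht)
    obtain ⟨t', ht', hst'⟩ := hcof s hs
    exact ⟨t', ht', lt_of_lt_of_le hts hst'⟩
  haveI : Nonempty ↥T := hTne.to_subtype
  haveI : NoMaxOrder ↥T := by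
    constructor
    rintro ⟨t, ht⟩
    obtain ⟨t', ht', h⟩ := hTnomax t ht
    exact ⟨⟨t', ht'⟩, Subtype.mk_lt_mk.2 h⟩
  haveI hwfT : WellFoundedLT ↥T := by
    constructor
    refine Subrelation.wf ?_ (InvImage.wf (fun t : ↥T => (t : Γ)) hr)
    intro p q hpq
    rcases trichotomous_of WellOrderingRel (p : Γ) (q : Γ) with h | h | h
    · exact h
    · exact absurd (Subtype.coe_lt_coe.2 hpq) (by rw [h]; exact lt_irrefl _)
    · exact absurd (p.2.2 q q.2.1 h) (not_lt.2 (Subtype.coe_lt_coe.2 hpq).le)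
  -- the sequence
  have hch : ∀ t : ↥T, ∃ g ∈ (G : Set H), v (k - g) = (t : Γ) := fun t => hTS t.2
  set a : ↥T → H := fun t => (hch t).choose with ha
  have haG : ∀ t, a t ∈ (G : Set H) := fun t => (hch t).choose_spec.1
  have hav : ∀ t, v (k - a t) = (t : Γ) := fun t => (hch t).choose_spec.2
  have hdiff : ∀ t t' : ↥T, t < t' → v (a t - a t') = (t : Γ) := by
    intro t t' h
    have h1 : v (a t - k) = (t : Γ) := by rw [← hv.v_neg, neg_sub, hav]
    have h2 : v (a t - k) < v (k - a t') := by
      rw [h1, hav]; exact Subtype.coe_lt_coe.2 h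
    have h3 := hv.v_add_eq_left h2
    rw [sub_add_sub_cancel] at h3
    rw [h3, h1]
  obtain ⟨t⟩ := (inferInstance : Nonempty ↥T)
  have hpcs : IsPseudoCauchy v a := by
    refine ⟨t, fun i j l _ hij hjl => ?_⟩
    rw [hdiff i j hij, hdiff j l hjl]
    exact Subtype.coe_lt_coe.2 hij
  have hlimk : IsPseudoLimit v a k := by
    refine ⟨t, fun i j _ hij => ?_⟩
    rw [hdiff i j hij, ← hv.v_neg (a i - k), neg_sub, hav]
  obtain ⟨y, hyG, t₀, hy⟩ := hpc ↥T a haG hpcs ⟨k, trivial, hlimk⟩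
  -- contradiction
  obtain ⟨s, hsS, hks⟩ := hSnomax (v (k - y)) ⟨y, hyG, rfl⟩
  obtain ⟨t', ht'T, hst'⟩ := hcof s hsS
  set t₁ : ↥T := max ⟨t', ht'T⟩ t₀ with ht₁
  obtain ⟨t₂, ht₂⟩ := exists_gt t₁
  have h1 : v (a t₁ - y) = (t₁ : Γ) := by
    rw [hy t₁ t₂ (le_max_right _ _) ht₂, hdiff t₁ t₂ ht₂]
  have h2 : v (k - a t₁) = (t₁ : Γ) := hav t₁
  have h3 : (t₁ : Γ) ≤ v (k - y) := by
    have h4 := hv.min_le_add (k - a t₁) (a t₁ - y)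
    rw [sub_add_sub_cancel, h1, h2, min_self] at h4
    exact h4
  have h5 : ((⟨t', ht'T⟩ : ↥T) : Γ) ≤ (t₁ : Γ) := Subtype.coe_le_coe.2 (le_max_left _ _)
  exact absurd (lt_of_lt_of_le hks (le_trans hst' (le_trans h5 h3))) (lt_irrefl _)

/-- Let `G` be a ℤ-invariant valued abelian group (a subgroup of the
ambient valued abelian group `(H, v)`, with the restricted valuation) such that for all
`g ∈ G` and all `m ∈ ℕ` the set `Δ_m(g) = {v (g - m • g') : g' ∈ G}` admits a maximum, and
let `H/G` be an extension of valued abelian groups (where `H` is not required to be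
ℤ-invariant). Then `H/G` is maximal if and only if `H/G` is pseudo-complete. -/
theorem maximalIn_iff_pseudoCompleteIn {H Γ : Type u} [AddCommGroup H] [LinearOrder Γ]
    [OrderTop Γ] (v : H → Γ) (hv : IsValuedGroup v) (G : AddSubgroup H)
    (hinv : ∀ g ∈ G, ∀ n : ℕ, 0 < n → v (n • g) = v g)
    (hdelta : ∀ g ∈ G, ∀ m : ℕ,
      ∃ δ : Γ, IsGreatest {δ' : Γ | ∃ g' ∈ G, v (g - m • g') = δ'} δ) :
    IsMaximalIn v G ↔ IsPseudoCompleteIn v (G : Set H) Set.univ := by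
  exact ⟨fun hmax => dirA v hv G hinv hdelta hmax, fun hpc => dirB v hv G hpc⟩
end

section
/- Let (G, v) be a ℤ-invariant pseudo-complete valued abelian group and let m > 0. Then the induced valued group modulo m, (G/mG, val^m), is pseudo-complete: for every sequence (a_i)_{i∈I} in G (I well-ordered with no greatest element) such that eventually V_{a_i − a_j}^m ⊋ V_{a_j − a_k}^m for all i < j < k (i.e. (a_i mod mG) is pseudo-Cauchy for val^m), there exists b ∈ G such that eventually V_{a_i − b}^m = V_{a_i − a_j}^m for all i < j (i.e. b mod mG is a pseudo-limit for val^m). -/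
universe u

/-- For a valued abelian group `(G, v)`, `m ∈ ℕ` and `a ∈ G`, the set
`V_a^m = {x ∈ G : v (a + m • g) < v x for all g ∈ G}`, i.e. the largest convex subgroup
of `G` not meeting `a + mG` (and `∅` if `a ∈ mG`). -/
def Vm {G Γ : Type*} [AddCommGroup G] [LinearOrder Γ] (v : G → Γ) (m : ℕ) (a : G) :
    Set G :=
  {x : G | ∀ g : G, v (a + m • g) < v x}

section aux
variable {G Γ : Type u} [AddCommGroup G] [LinearOrder Γ] [OrderTop Γ] {v : G → Γ}

lemma vg_zero (hv : IsValuedGroup v) : v 0 = ⊤ := (hv.eq_top_iff 0).2 rfl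

lemma vg_neg (hv : IsValuedGroup v) (x : G) : v (-x) = v x := by
  have key : ∀ y : G, v y ≤ v (-y) := by
    intro y
    have h := hv.min_le_sub 0 y
    rw [zero_sub] at h
    simpa [vg_zero hv] using h
  exact le_antisymm (by simpa using key (-x)) (key x)

lemma vg_add_ge (hv : IsValuedGroup v) (x y : G) : min (v x) (v y) ≤ v (x + y) := by
  have h := hv.min_le_sub x (-y)
  rwa [sub_neg_eq_add, vg_neg hv] at h

lemma vg_add_eq_left (hv : IsValuedGroup v) {x y : G} (h : v x < v y) :
    v (x + y) = v x := by
  have h1 : v x ≤ v (x + y) := by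
    have := vg_add_ge hv x y
    rwa [min_eq_left h.le] at this
  refine le_antisymm ?_ h1
  have h2 : min (v (x + y)) (v y) ≤ v x := by
    have := hv.min_le_sub (x + y) y
    rwa [add_sub_cancel_right] at this
  rcases le_total (v (x + y)) (v y) with hle | hle
  · rwa [min_eq_left hle] at h2
  · rw [min_eq_right hle] at h2; exact absurd h2 (not_le.mpr h)

lemma vg_sub_eq_left (hv : IsValuedGroup v) {x y : G} (h : v x < v y) :
    v (x - y) = v x := by
  rw [sub_eq_add_neg]; exact vg_add_eq_left hv (by rwa [vg_neg hv])

lemma exists_max_coset (hv : IsValuedGroup v)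
    (hinv : ∀ (g : G) (n : ℕ), 0 < n → v (n • g) = v g)
    (hpc : IsPseudoComplete v) {m : ℕ} (hm : 0 < m) (x : G) :
    ∃ γ : Γ, (∃ g : G, v (x + m • g) = γ) ∧ ∀ g : G, v (x + m • g) ≤ γ := by
  classical
  by_contra hS
  push_neg at hS
  -- hS : ∀ γ, (∃ g, v (x + m•g) = γ) → ∃ g, γ < v (x + m • g)
  set S : Set Γ := Set.range (fun g : G => v (x + m • g)) with hSdef
  have hnomax : ∀ γ ∈ S, ∃ δ ∈ S, γ < δ := by
    rintro γ ⟨g, rfl⟩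
    obtain ⟨g', hg'⟩ := hS _ ⟨g, rfl⟩
    exact ⟨_, ⟨g', rfl⟩, hg'⟩
  let r : Γ → Γ → Prop := WellOrderingRel
  have hwf : WellFounded r := IsWellFounded.wf
  let C : Set Γ := {γ | γ ∈ S ∧ ∀ δ ∈ S, r δ γ → δ < γ}
  have hCS : ∀ c : ↥C, (c : Γ) ∈ S := fun c => c.2.1
  have hCprop : ∀ c : ↥C, ∀ δ ∈ S, r δ (c : Γ) → δ < (c : Γ) := fun c => c.2.2
  have hcof : ∀ γ ∈ S, ∃ c ∈ C, γ ≤ c := by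
    intro γ hγ
    have hTne : {δ | δ ∈ S ∧ γ ≤ δ}.Nonempty := ⟨γ, hγ, le_refl γ⟩
    refine ⟨hwf.min _ hTne, ⟨(hwf.min_mem _ hTne).1, ?_⟩, (hwf.min_mem _ hTne).2⟩
    intro δ hδ hrδ
    by_contra hnot
    push_neg at hnot
    exact hwf.not_lt_min {δ | δ ∈ S ∧ γ ≤ δ} (x := δ) ⟨hδ, le_trans (hwf.min_mem _ hTne).2 hnot⟩ hrδ
  have hCne : C.Nonempty := by
    obtain ⟨c, hc, _⟩ := hcof (v (x + m • (0:G))) ⟨0, rfl⟩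
    exact ⟨c, hc⟩
  have hlt_r : ∀ c d : ↥C, (c : Γ) < (d : Γ) → r (c : Γ) (d : Γ) := by
    intro c d hcd
    rcases @trichotomous Γ r _ (c : Γ) (d : Γ) with h | h | h
    · exact h
    · exact absurd h (ne_of_lt hcd)
    · exact absurd (hCprop c _ (hCS d) h) (lt_asymm hcd)
  haveI : WellFoundedLT ↥C := by
    constructor
    exact Subrelation.wf (fun {c d} hcd => hlt_r c d hcd)
      (InvImage.wf (fun c : ↥C => (c : Γ)) hwf)
  haveI : NoMaxOrder ↥C := by
    constructor
    intro c
    obtain ⟨δ, hδS, hδ⟩ := hnomax _ (hCS c)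
    obtain ⟨d, hdC, hdd⟩ := hcof δ hδS
    exact ⟨⟨d, hdC⟩, by exact_mod_cast lt_of_lt_of_le hδ hdd⟩
  haveI : Nonempty ↥C := ⟨⟨hCne.choose, hCne.choose_spec⟩⟩
  have hchoose : ∀ c : ↥C, ∃ g : G, v (x + m • g) = (c : Γ) := fun c => hCS c
  choose w hw using hchoose
  have hpair : ∀ c d : ↥C, c < d → v (w c - w d) = (c : Γ) := by
    intro c d hcd
    have h1 : m • (w c - w d) = (x + m • w c) - (x + m • w d) := by
      rw [smul_sub]; abel
    have h2 : v (m • (w c - w d)) = (c : Γ) := by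
      rw [h1, vg_sub_eq_left hv (by rw [hw c, hw d]; exact_mod_cast hcd)]
      exact hw c
    rwa [hinv _ m hm] at h2
  have hpcw : IsPseudoCauchy v w := by
    refine ⟨Classical.arbitrary _, fun c d e _ hcd hde => ?_⟩
    rw [hpair c d hcd, hpair d e hde]
    exact_mod_cast hcd
  obtain ⟨g', c₁, hlim⟩ := hpc ↥C w hpcw
  obtain ⟨c₂, hc₂C, hc₂⟩ := hcof (v (x + m • g')) ⟨g', rfl⟩
  obtain ⟨d, hd⟩ := exists_gt (max c₁ ⟨c₂, hc₂C⟩)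
  obtain ⟨e, he⟩ := exists_gt d
  have h1 : v (w d - g') = (d : Γ) := by
    rw [hlim d e (le_trans (le_max_left _ _) hd.le) he]
    exact hpair d e he
  have h2 : x + m • g' = (x + m • w d) - m • (w d - g') := by
    rw [smul_sub]; abel
  have h3 : (d : Γ) ≤ v (x + m • g') := by
    rw [h2]
    have h4 := hv.min_le_sub (x + m • w d) (m • (w d - g'))
    rw [hw d, hinv _ m hm, h1, min_self] at h4
    exact h4
  have h5 : ((max c₁ ⟨c₂, hc₂C⟩ : ↥C) : Γ) < (d : Γ) := by exact_mod_cast hd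
  have h6 : c₂ ≤ ((max c₁ ⟨c₂, hc₂C⟩ : ↥C) : Γ) := by
    exact_mod_cast (le_max_right c₁ (⟨c₂, hc₂C⟩ : ↥C))
  exact absurd (le_trans h3 hc₂) (not_le.mpr (lt_of_le_of_lt h6 h5))

end aux

/-- Let `(G, v)` be a ℤ-invariant pseudo-complete valued abelian group and
`m > 0`. Then the induced valued group modulo `m`, `(G/mG, val^m)`, is pseudo-complete:
for every sequence `(a_i)` in `G` such that eventually `V^m_{a_i - a_j} ⊋ V^m_{a_j - a_k}`
for `i < j < k` (i.e. `(a_i mod mG)` is pseudo-Cauchy for `val^m`), there exists `b ∈ G`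
such that eventually `V^m_{a_i - b} = V^m_{a_i - a_j}` for `i < j` (i.e. `b mod mG` is a
pseudo-limit for `val^m`). -/
theorem quotient_pseudoComplete_of_pseudoComplete {G Γ : Type u} [AddCommGroup G]
    [LinearOrder Γ] [OrderTop Γ] (v : G → Γ) (hv : IsValuedGroup v)
    (hinv : ∀ (g : G) (n : ℕ), 0 < n → v (n • g) = v g)
    (hpc : IsPseudoComplete v) (m : ℕ) (hm : 0 < m)
    (I : Type u) [LinearOrder I] [WellFoundedLT I] [NoMaxOrder I] [Nonempty I]
    (a : I → G)
    (hc : ∃ i₀ : I, ∀ i j k : I, i₀ ≤ i → i < j → j < k →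
      Vm v m (a j - a k) ⊂ Vm v m (a i - a j)) :
    ∃ b : G, ∃ i₀ : I, ∀ i j : I, i₀ ≤ i → i < j →
      Vm v m (a i - b) = Vm v m (a i - a j) := by
  classical
  obtain ⟨i₀, hc⟩ := hc
  -- the maximum value μ x on the coset x + mG, attained at opt x
  have hmax := fun x : G => exists_max_coset hv hinv hpc hm x
  choose μ hμ using hmax
  have hμub : ∀ x g : G, v (x + m • g) ≤ μ x := fun x => (hμ x).2
  choose opt hopt using fun x : G => (hμ x).1
  have hVm : ∀ x : G, Vm v m x = {z : G | μ x < v z} := by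
    intro x
    ext z
    simp only [Vm, Set.mem_setOf_eq]
    constructor
    · intro hz
      have h := hz (opt x)
      rwa [hopt x] at h
    · intro hz g
      exact lt_of_le_of_lt (hμub x g) hz
  have hF1 : ∀ i j k : I, i₀ ≤ i → i < j → j < k → μ (a i - a j) < μ (a j - a k) := by
    intro i j k hi hij hjk
    obtain ⟨z, hzt, hzs⟩ := Set.exists_of_ssubset (hc i j k hi hij hjk)
    rw [hVm] at hzt hzs
    simp only [Set.mem_setOf_eq] at hzt hzs
    exact lt_of_lt_of_le hzt (not_lt.mp hzs)
  choose succ hsucclt using fun i : I => exists_gt i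
  have hF2 : ∀ i j k : I, i₀ ≤ i → i < j → j < k → μ (a i - a j) = μ (a i - a k) := by
    intro i j k hi hij hjk
    apply le_antisymm
    · have hid : a i - a k + m • (opt (a i - a j) + opt (a j - a k))
          = (a i - a j + m • opt (a i - a j)) + (a j - a k + m • opt (a j - a k)) := by
        rw [smul_add]; abel
      have hval : v (a i - a k + m • (opt (a i - a j) + opt (a j - a k)))
          = μ (a i - a j) := by
        rw [hid, vg_add_eq_left hv (by rw [hopt, hopt]; exact hF1 i j k hi hij hjk)]
        exact hopt _
      calc μ (a i - a j) = _ := hval.symm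
        _ ≤ μ (a i - a k) := hμub _ _
    · have hdec : ∀ g : G, v (a i - a k + m • g) ≤ μ (a i - a j) := by
        intro g
        have hid : a i - a k + m • g
            = (a i - a j + m • (g - opt (a j - a k)))
              + (a j - a k + m • opt (a j - a k)) := by
          rw [smul_sub]; abel
        rw [hid, vg_add_eq_left hv
          (lt_of_le_of_lt (hμub _ _) (by rw [hopt]; exact hF1 i j k hi hij hjk))]
        exact hμub _ _
      calc μ (a i - a k) = v (a i - a k + m • opt (a i - a k)) := (hopt _).symm
        _ ≤ μ (a i - a j) := hdec _
  have hγeq : ∀ i j : I, i₀ ≤ i → i < j → μ (a i - a j) = μ (a i - a (succ i)) := by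
    intro i j hi hij
    rcases lt_trichotomy j (succ i) with h | h | h
    · exact hF2 i j (succ i) hi hij h
    · rw [h]
    · exact (hF2 i (succ i) j hi (hsucclt i) h).symm
  set γf : I → Γ := fun i => μ (a i - a (succ i)) with hγf
  have hγeq' : ∀ i j : I, i₀ ≤ i → i < j → μ (a i - a j) = γf i := hγeq
  have hγlt : ∀ i j : I, i₀ ≤ i → i < j → γf i < γf j := by
    intro i j hi hij
    rw [← hγeq' i j hi hij]
    have h := hF1 i j (succ j) hi hij (hsucclt j)
    rwa [hγeq' j (succ j) (le_trans hi hij.le) (hsucclt j)] at h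
  have wfI : WellFounded ((· < ·) : I → I → Prop) := IsWellFounded.wf
  -- the recursively corrected sequence
  obtain ⟨g, hg⟩ : ∃ g : I → G, ∀ k : I,
      (∃ x : G, ∀ j : I, i₀ ≤ j → j < k → v (a j - a k + m • (g j - x)) = γf j) →
      ∀ j : I, i₀ ≤ j → j < k → v (a j - a k + m • (g j - g k)) = γf j := by
    refine ⟨WellFounded.fix wfI (fun k ih =>
      if h : ∃ x : G, ∀ (j : I) (_ : i₀ ≤ j) (hjk : j < k),
          v (a j - a k + m • (ih j hjk - x)) = γf j then h.choose else 0), ?_⟩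
    intro k hex j hj hjk
    have heq := WellFounded.fix_eq wfI (fun k ih =>
      if h : ∃ x : G, ∀ (j : I) (_ : i₀ ≤ j) (hjk : j < k),
          v (a j - a k + m • (ih j hjk - x)) = γf j then h.choose else 0) k
    rw [heq, dif_pos hex]
    exact hex.choose_spec j hj hjk
  have key : ∀ k j : I, i₀ ≤ j → j < k → v (a j - a k + m • (g j - g k)) = γf j := by
    intro k
    refine wfI.induction
      (C := fun k => ∀ j : I, i₀ ≤ j → j < k → v (a j - a k + m • (g j - g k)) = γf j)
      k ?_
    intro k ih
    apply hg k
    by_cases hJ : ∃ j : I, i₀ ≤ j ∧ j < k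
    case neg => exact ⟨0, fun j hj hjk => absurd ⟨j, hj, hjk⟩ hJ⟩
    by_cases hmaxJ : ∃ jm : I, (i₀ ≤ jm ∧ jm < k) ∧ ∀ j : I, i₀ ≤ j → j < k → j ≤ jm
    · -- successor case
      obtain ⟨jm, ⟨hjm₀, hjmk⟩, hjmmax⟩ := hmaxJ
      refine ⟨g jm - opt (a jm - a k), ?_⟩
      have h2 : v (a jm - a k + m • (g jm - (g jm - opt (a jm - a k)))) = γf jm := by
        have hx : g jm - (g jm - opt (a jm - a k)) = opt (a jm - a k) := by abel
        rw [hx, hopt, hγeq' jm k hjm₀ hjmk]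
      intro j hj hjk
      rcases eq_or_lt_of_le (hjmmax j hj hjk) with rfl | hlt
      · exact h2
      · have h1 : v (a j - a jm + m • (g j - g jm)) = γf j := ih jm hjmk j hj hlt
        have hid : a j - a k + m • (g j - (g jm - opt (a jm - a k)))
            = (a j - a jm + m • (g j - g jm))
              + (a jm - a k + m • (g jm - (g jm - opt (a jm - a k)))) := by
          simp only [smul_sub]; abel
        rw [hid, vg_add_eq_left hv (by rw [h1, h2]; exact hγlt j jm hj hlt), h1]
    · -- limit case
      push_neg at hmaxJ
      obtain ⟨j₀, hj₀⟩ := hJ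
      haveI : Nonempty {p : I // i₀ ≤ p ∧ p < k} := ⟨⟨j₀, hj₀⟩⟩
      haveI : NoMaxOrder {p : I // i₀ ≤ p ∧ p < k} := by
        constructor
        rintro ⟨p, hp₀, hpk⟩
        obtain ⟨q, hq₀, hqk, hpq⟩ := hmaxJ p ⟨hp₀, hpk⟩
        exact ⟨⟨q, hq₀, hqk⟩, by exact_mod_cast hpq⟩
      set b : {p : I // i₀ ≤ p ∧ p < k} → G := fun p => a p.val + m • g p.val with hb
      have hbdiff : ∀ p q : {p : I // i₀ ≤ p ∧ p < k}, p < q →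
          v (b p - b q) = γf p.val := by
        intro p q hpq
        have hid : b p - b q = a p.val - a q.val + m • (g p.val - g q.val) := by
          simp only [hb]; rw [smul_sub]; abel
        rw [hid]
        exact ih q.val q.2.2 p.val p.2.1 hpq
      have hbpc : IsPseudoCauchy v b := by
        refine ⟨Classical.arbitrary _, fun p q r _ hpq hqr => ?_⟩
        rw [hbdiff p q hpq, hbdiff q r hqr]
        exact hγlt p.val q.val p.2.1 hpq
      obtain ⟨c, j₁, hlim⟩ := hpc _ b hbpc
      have hbc : ∀ p : {p : I // i₀ ≤ p ∧ p < k}, j₁ ≤ p → v (b p - c) = γf p.val := by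
        intro p hp
        obtain ⟨q, hq⟩ := exists_gt p
        rw [hlim p q hp hq]
        exact hbdiff p q hq
      have hμbig : ∀ p : {p : I // i₀ ≤ p ∧ p < k}, γf p.val < μ (a k - c) := by
        intro p
        obtain ⟨q, hq⟩ := exists_gt (max p j₁)
        have hq1 : v (b q - c) = γf q.val :=
          hbc q (le_of_lt (lt_of_le_of_lt (le_max_right _ _) hq))
        have hq2 : v (a q.val - a k + m • opt (a q.val - a k)) = γf q.val := by
          rw [hopt, hγeq' q.val k q.2.1 q.2.2]
        have hid : a k - c + m • (g q.val - opt (a q.val - a k))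
            = (b q - c) - (a q.val - a k + m • opt (a q.val - a k)) := by
          simp only [hb]; simp only [smul_sub]; abel
        have h3 : γf q.val ≤ v (a k - c + m • (g q.val - opt (a q.val - a k))) := by
          rw [hid]
          have h4 := hv.min_le_sub (b q - c) (a q.val - a k + m • opt (a q.val - a k))
          rwa [hq1, hq2, min_self] at h4
        have h4 : γf q.val ≤ μ (a k - c) := le_trans h3 (hμub _ _)
        exact lt_of_lt_of_le
          (hγlt p.val q.val p.2.1 (lt_of_le_of_lt (le_max_left _ _) hq)) h4
      refine ⟨opt (a k - c), ?_⟩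
      have hmain : ∀ p : {p : I // i₀ ≤ p ∧ p < k}, j₁ ≤ p →
          v (a p.val - a k + m • (g p.val - opt (a k - c))) = γf p.val := by
        intro p hp
        have hid : a p.val - a k + m • (g p.val - opt (a k - c))
            = (b p - c) - (a k - c + m • opt (a k - c)) := by
          simp only [hb]; simp only [smul_sub]; abel
        rw [hid, vg_sub_eq_left hv (by rw [hbc p hp, hopt]; exact hμbig p)]
        exact hbc p hp
      intro j hj hjk
      rcases le_or_gt j₁ ⟨j, hj, hjk⟩ with hle | hlt
      · exact hmain ⟨j, hj, hjk⟩ hle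
      · have hlt' : j < j₁.val := hlt
        have h1 : v (a j - a j₁.val + m • (g j - g j₁.val)) = γf j :=
          ih j₁.val j₁.2.2 j hj hlt'
        have h2 : v (a j₁.val - a k + m • (g j₁.val - opt (a k - c))) = γf j₁.val :=
          hmain j₁ (le_refl _)
        have hid : a j - a k + m • (g j - opt (a k - c))
            = (a j - a j₁.val + m • (g j - g j₁.val))
              + (a j₁.val - a k + m • (g j₁.val - opt (a k - c))) := by
          simp only [smul_sub]; abel
        rw [hid, vg_add_eq_left hv (by rw [h1, h2]; exact hγlt j j₁.val hj hlt'), h1]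
  -- the full corrected sequence is pseudo-Cauchy
  have hbfull : IsPseudoCauchy v (fun i : I => a i + m • g i) := by
    refine ⟨i₀, fun i j k hi hij hjk => ?_⟩
    have d1 : (a i + m • g i) - (a j + m • g j) = a i - a j + m • (g i - g j) := by
      rw [smul_sub]; abel
    have d2 : (a j + m • g j) - (a k + m • g k) = a j - a k + m • (g j - g k) := by
      rw [smul_sub]; abel
    rw [d1, d2, key j i hi hij, key k j (le_trans hi hij.le) hjk]
    exact hγlt i j hi hij
  obtain ⟨cstar, i₁, hlim⟩ := hpc I _ hbfull
  refine ⟨cstar, max i₀ i₁, fun i j hi hij => ?_⟩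
  have hi0 : i₀ ≤ i := le_trans (le_max_left _ _) hi
  have hi1 : i₁ ≤ i := le_trans (le_max_right _ _) hi
  rw [hVm, hVm]
  have hμeq : μ (a i - cstar) = μ (a i - a j) := by
    rw [hγeq' i j hi0 hij]
    apply le_antisymm
    · obtain ⟨j', hj'⟩ := exists_gt j
      have hbj : v ((a j + m • g j) - cstar) = γf j := by
        rw [hlim j j' (le_trans hi1 hij.le) hj']
        have hd : (a j + m • g j) - (a j' + m • g j')
            = a j - a j' + m • (g j - g j') := by rw [smul_sub]; abel
        rw [hd]
        exact key j' j (le_trans hi0 hij.le) hj'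
      rw [← hopt (a i - cstar)]
      have hid : a i - cstar + m • opt (a i - cstar)
          = (a i - a j + m • (opt (a i - cstar) - g j)) + ((a j + m • g j) - cstar) := by
        simp only [smul_sub]; abel
      rw [hid, vg_add_eq_left hv (by
        rw [hbj]
        exact lt_of_le_of_lt
          (le_of_le_of_eq (hμub _ _) (hγeq' i j hi0 hij)) (hγlt i j hi0 hij))]
      exact le_of_le_of_eq (hμub _ _) (hγeq' i j hi0 hij)
    · have hbi : v ((a i + m • g i) - cstar) = γf i := by
        rw [hlim i j hi1 hij]
        have hd : (a i + m • g i) - (a j + m • g j)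
            = a i - a j + m • (g i - g j) := by rw [smul_sub]; abel
        rw [hd]
        exact key j i hi0 hij
      have hid : a i - cstar + m • g i = (a i + m • g i) - cstar := by abel
      calc γf i = v (a i - cstar + m • g i) := by rw [hid, hbi]
        _ ≤ μ (a i - cstar) := hμub _ _
  rw [hμeq]
end
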